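/- Fix an integer D ≥ 2 and let M_3(n,D) denote the maximum size of a mutually uncorrelated D-GC-prefix-balanced set of words of length n over the four-letter DNA alphabet {A,T,G,C}. Then liminf_{m→∞} M_3(2m+1, D)^{1/(2m+1)} ≥ 2·cos(π/(D+1)); in particular M_3(n,D) grows exponentially in n along odd n. -/
import Mathlib


/-- The four-letter DNA alphabet. -/
inductive DNA | A | T | G | C
deriving DecidableEq

/-- Hamming distance between two words (of equal length) given as lists. -/
def hammingD {α : Type*} [DecidableEq α] (x y : List α) : ℕ :=
  (x.zip y).countP (fun p => decide (p.1 ≠ p.2))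

/-- A binary word has `D`-bounded running digital sum if in every prefix the
numbers of ones and zeros differ by at most `D`. -/
def brds (D : ℕ) (w : List Bool) : Prop :=
  ∀ k ≤ w.length,
    (((w.take k).count true : ℤ) - ((w.take k).count false : ℤ)).natAbs ≤ D

/-- The letters `G`, `C` of the DNA alphabet. -/
def isGC : DNA → Bool
  | DNA.G => true
  | DNA.C => true
  | _ => false

/-- A DNA word is `D`-GC-prefix-balanced if in every prefix the number of
letters from {G,C} and the number of letters from {A,T} differ by at most `D`. -/
def gcpb (D : ℕ) (w : List DNA) : Prop :=
  ∀ k ≤ w.length,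
    (((w.take k).countP isGC : ℤ) - ((w.take k).countP (fun c => !(isGC c)) : ℤ)).natAbs ≤ D

/-- A word is self-uncorrelated if no proper nonempty prefix equals the suffix
of the same length. -/
def selfUncorr {α : Type*} (w : List α) : Prop :=
  ∀ k, 1 ≤ k → k ≤ w.length - 1 → w.take k ≠ w.drop (w.length - k)

/-- A set of words is mutually uncorrelated if every word is self-uncorrelated
and for every ordered pair of distinct words `x`, `y` no nonempty prefix of `y`
equals a suffix of `x` of the same length. -/
def mutUncorr {α : Type*} (S : Set (List α)) : Prop :=
  (∀ w ∈ S, selfUncorr w) ∧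
  ∀ x ∈ S, ∀ y ∈ S, x ≠ y →
    ∀ k, 1 ≤ k → k ≤ x.length → y.take k ≠ x.drop (x.length - k)

/-- A Dyck word: equal numbers of ones and zeros, and every prefix has at least
as many ones as zeros. -/
def isDyck (w : List Bool) : Prop :=
  w.count true = w.count false ∧
  ∀ k ≤ w.length, (w.take k).count false ≤ (w.take k).count true

/-- The height of a (Dyck) word is at most `D`: in every prefix the number of
ones exceeds the number of zeros by at most `D`. -/
def heightLe (D : ℕ) (w : List Bool) : Prop :=
  ∀ k ≤ w.length, ((w.take k).count true : ℤ) - ((w.take k).count false : ℤ) ≤ (D : ℤ)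

/-- `M₃ n D`: the maximum size of a mutually uncorrelated `D`-GCPB set of DNA
words of length `n`. -/
noncomputable def M3 (n D : ℕ) : ℕ :=
  sSup {M : ℕ | ∃ C : Finset (List DNA), C.card = M ∧
    (∀ w ∈ C, w.length = n) ∧ (∀ w ∈ C, gcpb D w) ∧
    mutUncorr (C : Set (List DNA))}


instance : Fintype DNA :=
  ⟨{DNA.A, DNA.T, DNA.G, DNA.C}, by intro x; cases x <;> simp⟩

def blockB : ℕ → List Bool
  | 0 => []
  | m+1 => true :: false :: blockB m

lemma blockB_length (m : ℕ) : (blockB m).length = 2 * m := by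
  induction m with
  | zero => rfl
  | succ m ih => simp [blockB, ih]; omega

def pat (m : ℕ) : List Bool := true :: blockB m

lemma pat_length (m : ℕ) : (pat m).length = 2 * m + 1 := by
  simp [pat, blockB_length]

lemma blockB_noTT (m j : ℕ) (l : List Bool) :
    (blockB m).drop j ≠ true :: true :: l := by
  induction m generalizing j with
  | zero => simp [blockB]
  | succ m ih =>
    match j with
    | 0 => simp [blockB]
    | 1 => simp [blockB]
    | (j+2) => simpa [blockB] using ih j

lemma blockB_noT1 (m j : ℕ) : (blockB m).drop j ≠ [true] := by
  induction m generalizing j with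
  | zero => simp [blockB]
  | succ m ih =>
    match j with
    | 0 =>
      simp only [blockB, List.drop]
      intro h
      have := congrArg List.length h
      simp at this
    | 1 => simp [blockB]
    | (j+2) => simpa [blockB] using ih j

lemma blockB_counts (m j : ℕ) :
    ((blockB m).take j).count false ≤ ((blockB m).take j).count true ∧
    ((blockB m).take j).count true ≤ ((blockB m).take j).count false + 1 := by
  induction m generalizing j with
  | zero => simp [blockB]
  | succ m ih =>
    match j with
    | 0 => simp
    | 1 => simp [blockB]
    | (j+2) =>
      obtain ⟨h1, h2⟩ := ih j
      simp only [blockB, List.take, List.count_cons]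
      simp only [beq_self_eq_true, if_true, beq_iff_eq, Bool.true_eq_false,
        Bool.false_eq_true, if_false, reduceIte]
      omega

lemma pat_uncorr (m k : ℕ) (hk1 : 1 ≤ k) (hk2 : k ≤ 2 * m) :
    (pat m).take k ≠ (pat m).drop (2 * m + 1 - k) := by
  have hdrop : (pat m).drop (2 * m + 1 - k) = (blockB m).drop (2 * m - k) := by
    have : 2 * m + 1 - k = (2 * m - k) + 1 := by omega
    simp [pat, this]
  rw [hdrop]
  match k, hk1 with
  | 1, _ =>
    simp only [pat, List.take]
    intro h
    exact blockB_noT1 m (2 * m - 1) (by simpa using h.symm)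
  | (k+2), _ =>
    have hm : 1 ≤ m := by omega
    obtain ⟨m', rfl⟩ : ∃ m', m = m' + 1 := ⟨m - 1, by omega⟩
    simp only [pat, blockB, List.take]
    intro h
    exact blockB_noTT (m' + 1) (2 * (m' + 1) - (k + 2)) _ h.symm

def enc (b s : Bool) : DNA :=
  if b then (if s then DNA.G else DNA.C) else (if s then DNA.A else DNA.T)

def sgn : DNA → Bool
  | DNA.G => true
  | DNA.A => true
  | _ => false

lemma isGC_enc (b s : Bool) : isGC (enc b s) = b := by
  cases b <;> cases s <;> rfl

lemma sgn_enc (b s : Bool) : sgn (enc b s) = s := by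
  cases b <;> cases s <;> rfl

lemma zipWith_fst {α β : Type*} : ∀ (a : List α) (b : List β), a.length = b.length →
    List.zipWith (fun x _ => x) a b = a
  | [], [], _ => rfl
  | x :: a, y :: b, h => by
      simp only [List.zipWith, List.cons.injEq, true_and]
      exact zipWith_fst a b (by simpa using h)
  | [], _ :: _, h => by simp at h
  | _ :: _, [], h => by simp at h

lemma zipWith_snd {α β : Type*} : ∀ (a : List α) (b : List β), a.length = b.length →
    List.zipWith (fun _ y => y) a b = b
  | [], [], _ => rfl
  | x :: a, y :: b, h => by
      simp only [List.zipWith, List.cons.injEq, true_and]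
      exact zipWith_snd a b (by simpa using h)
  | [], _ :: _, h => by simp at h
  | _ :: _, [], h => by simp at h

def encW (m : ℕ) (v : Fin (2 * m + 1) → Bool) : List DNA :=
  List.zipWith enc (pat m) (List.ofFn v)

lemma encW_length (m : ℕ) (v : Fin (2 * m + 1) → Bool) :
    (encW m v).length = 2 * m + 1 := by
  simp [encW, pat_length]

lemma map_isGC_encW (m : ℕ) (v : Fin (2 * m + 1) → Bool) :
    (encW m v).map isGC = pat m := by
  rw [encW, List.map_zipWith]
  simp only [isGC_enc]
  exact zipWith_fst _ _ (by simp [pat_length])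

lemma map_sgn_encW (m : ℕ) (v : Fin (2 * m + 1) → Bool) :
    (encW m v).map sgn = List.ofFn v := by
  rw [encW, List.map_zipWith]
  simp only [sgn_enc]
  exact zipWith_snd _ _ (by simp [pat_length])

lemma encW_injective (m : ℕ) : Function.Injective (encW m) := by
  intro v w h
  have h2 := congrArg (List.map sgn) h
  rw [map_sgn_encW, map_sgn_encW] at h2
  exact List.ofFn_injective h2

lemma countP_isGC_eq (l : List DNA) : l.countP isGC = (l.map isGC).count true := by
  rw [List.count, List.countP_map]
  exact List.countP_congr (fun a _ => by cases h : isGC a <;> simp [Function.comp, h])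

lemma countP_notGC_eq (l : List DNA) :
    l.countP (fun c => !(isGC c)) = (l.map isGC).count false := by
  rw [List.count, List.countP_map]
  exact List.countP_congr (fun a _ => by cases h : isGC a <;> simp [Function.comp, h])

lemma pat_balanced (D m : ℕ) (hD : 2 ≤ D) (k : ℕ) :
    ((((pat m).take k).count true : ℤ) - (((pat m).take k).count false : ℤ)).natAbs ≤ D := by
  match k with
  | 0 => simp
  | (j+1) =>
    obtain ⟨h1, h2⟩ := blockB_counts m j
    simp only [pat, List.take, List.count_cons]
    simp only [beq_self_eq_true, if_true, beq_iff_eq, Bool.true_eq_false,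
      Bool.false_eq_true, if_false, reduceIte]
    omega

lemma gcpb_of_pat {D m : ℕ} (hD : 2 ≤ D) {w : List DNA} (hw : w.map isGC = pat m) :
    gcpb D w := by
  intro k _
  rw [countP_isGC_eq, countP_notGC_eq, List.map_take, hw]
  exact pat_balanced D m hD k

lemma pattern_uncorr {x y : List DNA} {m : ℕ}
    (hx : x.map isGC = pat m) (hy : y.map isGC = pat m)
    {k : ℕ} (hk1 : 1 ≤ k) (hk2 : k ≤ 2 * m) :
    y.take k ≠ x.drop (x.length - k) := by
  intro h
  apply pat_uncorr m k hk1 hk2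
  have hxlen : x.length = 2 * m + 1 := by
    rw [← pat_length m, ← hx, List.length_map]
  calc (pat m).take k = ((y.take k).map isGC) := by rw [List.map_take, hy]
    _ = ((x.drop (x.length - k)).map isGC) := by rw [h]
    _ = (pat m).drop (2 * m + 1 - k) := by rw [List.map_drop, hx, hxlen]

lemma card_DNA : Fintype.card DNA = 4 := rfl

lemma M3_card_le (n D : ℕ) : ∀ M ∈ {M : ℕ | ∃ C : Finset (List DNA), C.card = M ∧
      (∀ w ∈ C, w.length = n) ∧ (∀ w ∈ C, gcpb D w) ∧
      mutUncorr (C : Set (List DNA))}, M ≤ 4 ^ n := by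
  intro M hM
  obtain ⟨C, hc, hl, -, -⟩ := hM
  rw [← hc]
  calc C.card ≤ (Finset.univ : Finset (Fin n → DNA)).card := by
        apply Finset.card_le_card_of_injOn
          (fun w (i : Fin n) => w.getD i DNA.A) (fun w _ => Finset.mem_univ _)
        intro w1 h1 w2 h2 he
        simp only [Finset.mem_coe] at h1 h2
        apply List.ext_getElem (by rw [hl w1 h1, hl w2 h2])
        intro i hi1 hi2
        have hi : i < n := by rw [← hl w1 h1]; exact hi1
        have := congrFun he ⟨i, hi⟩
        rw [← List.getD_eq_getElem w1 DNA.A hi1, ← List.getD_eq_getElem w2 DNA.A hi2]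
        exact this
    _ = 4 ^ n := by
        rw [Finset.card_univ, Fintype.card_fun, card_DNA, Fintype.card_fin]

lemma M3_bddAbove (n D : ℕ) :
    BddAbove {M : ℕ | ∃ C : Finset (List DNA), C.card = M ∧
      (∀ w ∈ C, w.length = n) ∧ (∀ w ∈ C, gcpb D w) ∧
      mutUncorr (C : Set (List DNA))} :=
  ⟨4 ^ n, M3_card_le n D⟩

lemma M3_le (n D : ℕ) : M3 n D ≤ 4 ^ n := by
  apply csSup_le
  · exact ⟨0, ∅, by simp, by simp, by simp, by constructor <;> simp [mutUncorr]⟩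
  · exact M3_card_le n D

lemma M3_ge (m D : ℕ) (hD : 2 ≤ D) : 2 ^ (2 * m + 1) ≤ M3 (2 * m + 1) D := by
  apply le_csSup (M3_bddAbove _ _)
  refine ⟨Finset.image (encW m) Finset.univ, ?_, ?_, ?_, ?_, ?_⟩
  · rw [Finset.card_image_of_injective _ (encW_injective m), Finset.card_univ]
    simp
  · intro w hw
    obtain ⟨v, -, rfl⟩ := Finset.mem_image.mp hw
    exact encW_length m v
  · intro w hw
    obtain ⟨v, -, rfl⟩ := Finset.mem_image.mp hw
    exact gcpb_of_pat hD (map_isGC_encW m v)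
  · intro w hw k hk1 hk2
    simp only [Finset.mem_coe] at hw
    obtain ⟨v, -, rfl⟩ := Finset.mem_image.mp hw
    rw [encW_length] at hk2
    exact pattern_uncorr (map_isGC_encW m v) (map_isGC_encW m v) hk1 (by omega)
  · intro x hx y hy hxy k hk1 hk2
    simp only [Finset.mem_coe] at hx hy
    obtain ⟨vx, -, rfl⟩ := Finset.mem_image.mp hx
    obtain ⟨vy, -, rfl⟩ := Finset.mem_image.mp hy
    rw [encW_length] at hk2
    rcases lt_or_eq_of_le hk2 with hlt | heq
    · exact pattern_uncorr (map_isGC_encW m vx) (map_isGC_encW m vy) hk1 (by omega)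
    · intro h
      rw [List.take_of_length_le (by rw [encW_length]; omega),
        encW_length, heq, Nat.sub_self, List.drop_zero] at h
      exact hxy h.symm

/-- for fixed `D ≥ 2`,
`liminf_{m→∞} M₃(2m+1, D)^{1/(2m+1)} ≥ 2 cos(π/(D+1))`. -/
theorem stmt11 (D : ℕ) (hD : 2 ≤ D) :
    2 * Real.cos (Real.pi / ((D : ℝ) + 1)) ≤
      Filter.liminf
        (fun m : ℕ => (M3 (2 * m + 1) D : ℝ) ^ ((1 : ℝ) / (2 * (m : ℝ) + 1)))
        Filter.atTop := by
  have hexp : ∀ m : ℕ, ((2 * m + 1 : ℕ) : ℝ) * ((1 : ℝ) / (2 * (m : ℝ) + 1)) = 1 := by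
    intro m
    push_cast
    rw [mul_one_div, div_self]
    positivity
  have hterm : ∀ m : ℕ, (2 : ℝ) ≤ (M3 (2 * m + 1) D : ℝ) ^ ((1 : ℝ) / (2 * (m : ℝ) + 1)) := by
    intro m
    have hM : ((2 : ℝ)) ^ ((2 * m + 1 : ℕ) : ℝ) ≤ (M3 (2 * m + 1) D : ℝ) := by
      rw [Real.rpow_natCast]
      exact_mod_cast M3_ge m D hD
    calc (2 : ℝ) = ((2 : ℝ) ^ ((2 * m + 1 : ℕ) : ℝ)) ^ ((1 : ℝ) / (2 * (m : ℝ) + 1)) := by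
          rw [← Real.rpow_mul (by norm_num), hexp m, Real.rpow_one]
      _ ≤ _ := Real.rpow_le_rpow (by positivity) hM (by positivity)
  have hub : ∀ m : ℕ, (M3 (2 * m + 1) D : ℝ) ^ ((1 : ℝ) / (2 * (m : ℝ) + 1)) ≤ 4 := by
    intro m
    have hM : (M3 (2 * m + 1) D : ℝ) ≤ ((4 : ℝ)) ^ ((2 * m + 1 : ℕ) : ℝ) := by
      rw [Real.rpow_natCast]
      exact_mod_cast M3_le (2 * m + 1) D
    calc (M3 (2 * m + 1) D : ℝ) ^ ((1 : ℝ) / (2 * (m : ℝ) + 1))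
        ≤ (((4 : ℝ)) ^ ((2 * m + 1 : ℕ) : ℝ)) ^ ((1 : ℝ) / (2 * (m : ℝ) + 1)) :=
          Real.rpow_le_rpow (by positivity) hM (by positivity)
      _ = 4 := by rw [← Real.rpow_mul (by norm_num), hexp m, Real.rpow_one]
  have h2c : 2 * Real.cos (Real.pi / ((D : ℝ) + 1)) ≤ 2 := by
    nlinarith [Real.cos_le_one (Real.pi / ((D : ℝ) + 1))]
  refine le_trans h2c ?_
  have hb : Filter.IsBoundedUnder (· ≤ ·) Filter.atTop
      (fun m : ℕ => (M3 (2 * m + 1) D : ℝ) ^ ((1 : ℝ) / (2 * (m : ℝ) + 1))) :=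
    Filter.isBoundedUnder_of ⟨4, hub⟩
  exact Filter.le_liminf_of_le hb.isCobounded_flip (Filter.Eventually.of_forall hterm)
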